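/- (Prismatic joint, Lemma 3) For any normalized twist ξ̄ = (0, v) with ‖v‖ = 1, there exist θ, d, α, a such that for all q, exp(ξ̂̄ q) = H · T_Z(q) · H⁻¹ with H = R_Z(θ)T_Z(d)R_X(α)T_X(a). In fact one may take d = a = 0. -/

import Mathlib

open Matrix Real

set_option maxHeartbeats 1000000

noncomputable section

/-- Skew-symmetric matrix of a 3-vector. -/
def skew (w : Fin 3 → ℝ) : Matrix (Fin 3) (Fin 3) ℝ :=
  !![0, -w 2, w 1; w 2, 0, -w 0; -w 1, w 0, 0]

/-- 4×4 twist matrix of twist coordinates (ω, v). -/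
def twistM (w v : Fin 3 → ℝ) : Matrix (Fin 4) (Fin 4) ℝ :=
  !![0, -w 2, w 1, v 0;
     w 2, 0, -w 0, v 1;
     -w 1, w 0, 0, v 2;
     0, 0, 0, 0]

/-- Homogeneous transformation [[R,t],[0,1]]. -/
def homog (R : Matrix (Fin 3) (Fin 3) ℝ) (t : Fin 3 → ℝ) : Matrix (Fin 4) (Fin 4) ℝ :=
  !![R 0 0, R 0 1, R 0 2, t 0;
     R 1 0, R 1 1, R 1 2, t 1;
     R 2 0, R 2 1, R 2 2, t 2;
     0, 0, 0, 1]

def isSO3 (R : Matrix (Fin 3) (Fin 3) ℝ) : Prop := R * Rᵀ = 1 ∧ R.det = 1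

def isSE3 (H : Matrix (Fin 4) (Fin 4) ℝ) : Prop :=
  ∃ R t, isSO3 R ∧ H = homog R t

def isTwist (X : Matrix (Fin 4) (Fin 4) ℝ) : Prop := ∃ w v, X = twistM w v

def RZ (θ : ℝ) : Matrix (Fin 4) (Fin 4) ℝ :=
  homog !![Real.cos θ, -Real.sin θ, 0; Real.sin θ, Real.cos θ, 0; 0, 0, 1] ![0, 0, 0]

def TZ (d : ℝ) : Matrix (Fin 4) (Fin 4) ℝ := homog 1 ![0, 0, d]

def RX (α : ℝ) : Matrix (Fin 4) (Fin 4) ℝ :=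
  homog !![1, 0, 0; 0, Real.cos α, -Real.sin α; 0, Real.sin α, Real.cos α] ![0, 0, 0]

def TX (a : ℝ) : Matrix (Fin 4) (Fin 4) ℝ := homog 1 ![a, 0, 0]

/-- Lemma 3: D-H parameterization of a prismatic joint twist;
one may take d = a = 0. -/
lemma exp_sq_zero {M : Matrix (Fin 4) (Fin 4) ℝ} (h : M ^ 2 = 0) :
    NormedSpace.exp M = 1 + M := by
  rw [NormedSpace.exp_eq_tsum (𝕂 := ℝ)]
  beta_reduce
  rw [tsum_eq_sum (s := ({0, 1} : Finset ℕ)) ?_]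
  · norm_num
  · intro n hn
    have h2 : 2 ≤ n := by
      rcases n with _ | _ | n
      · simp at hn
      · simp at hn
      · omega
    obtain ⟨k, rfl⟩ := Nat.exists_eq_add_of_le h2
    rw [pow_add, h, zero_mul, smul_zero]

theorem prismatic_joint_DH (v : Fin 3 → ℝ)
    (hv : Real.sqrt (v 0 ^ 2 + v 1 ^ 2 + v 2 ^ 2) = 1) :
    ∃ θ d α a : ℝ, d = 0 ∧ a = 0 ∧
      ∀ q : ℝ,
        NormedSpace.exp (q • twistM 0 v) =
          (RZ θ * TZ d * RX α * TX a) * TZ q * (RZ θ * TZ d * RX α * TX a)⁻¹ := by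
  have hs : v 0 ^ 2 + v 1 ^ 2 + v 2 ^ 2 = 1 := by
    have h0 : (0:ℝ) ≤ v 0 ^ 2 + v 1 ^ 2 + v 2 ^ 2 := by positivity
    nlinarith [Real.sq_sqrt h0]
  set r := Real.sqrt (v 0 ^ 2 + v 1 ^ 2) with hr
  clear_value r
  have hr0 : 0 ≤ r := hr ▸ Real.sqrt_nonneg _
  have hrsq : r ^ 2 = v 0 ^ 2 + v 1 ^ 2 := by
    rw [hr]; exact Real.sq_sqrt (by positivity)
  obtain ⟨α, hca, hsa⟩ : ∃ α : ℝ, Real.cos α = v 2 ∧ Real.sin α = r := by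
    refine ⟨Real.arccos (v 2), Real.cos_arccos (by nlinarith) (by nlinarith), ?_⟩
    rw [Real.sin_arccos, hr]
    congr 1
    nlinarith
  obtain ⟨θ, hth0, hth1⟩ : ∃ θ : ℝ,
      Real.sin θ * Real.sin α = v 0 ∧ -Real.cos θ * Real.sin α = v 1 := by
    rcases eq_or_ne r 0 with h | h
    · have hv0 : v 0 = 0 := by nlinarith [sq_nonneg (v 0), sq_nonneg (v 1)]
      have hv1 : v 1 = 0 := by nlinarith [sq_nonneg (v 0), sq_nonneg (v 1)]
      exact ⟨0, by simp [hsa, h, hv0], by simp [hsa, h, hv1]⟩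
    · set z : ℂ := ⟨-v 1, v 0⟩ with hz
      have hzne : z ≠ 0 := by
        simp only [hz, ne_eq, Complex.ext_iff, Complex.zero_re, Complex.zero_im, not_and]
        intro h1 h2
        apply h
        rw [hr]
        simp only [h2]
        have : v 1 = 0 := by linarith
        simp [this]
      have habs : ‖z‖ = r := by
        rw [Complex.norm_def, Complex.normSq_mk, hr]
        congr 1
        ring
      refine ⟨Complex.arg z, ?_, ?_⟩
      · rw [Complex.sin_arg, hsa, habs]
        field_simp [hz]
        simp [hz]
      · rw [Complex.cos_arg hzne, hsa, habs]
        field_simp [hz]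
        simp [hz]
  refine ⟨θ, 0, α, 0, rfl, rfl, ?_⟩
  have hTZ0 : TZ 0 = 1 := by
    ext i j; fin_cases i <;> fin_cases j <;>
      simp [TZ, homog, Matrix.one_apply, Matrix.vecHead, Matrix.vecTail]
  have hTX0 : TX 0 = 1 := by
    ext i j; fin_cases i <;> fin_cases j <;>
      simp [TX, homog, Matrix.one_apply, Matrix.vecHead, Matrix.vecTail]
  rw [hTZ0, hTX0, mul_one, mul_one]
  set H := RZ θ * RX α with hH
  set G := homog !![Real.cos θ, Real.sin θ, 0;
      -Real.sin θ * Real.cos α, Real.cos θ * Real.cos α, Real.sin α;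
      Real.sin θ * Real.sin α, -Real.cos θ * Real.sin α, Real.cos α] ![0, 0, 0] with hG
  have hHG : H * G = 1 := by
    ext i j
    fin_cases i <;> fin_cases j <;>
      simp [hH, hG, RZ, RX, homog, Matrix.mul_apply, Fin.sum_univ_four, Matrix.one_apply,
        Matrix.vecHead, Matrix.vecTail, -mul_eq_zero] <;>
      first
      | ring1
      | linear_combination Real.sin_sq_add_cos_sq α
      | linear_combination Real.sin_sq_add_cos_sq θ + Real.sin θ ^ 2 * Real.sin_sq_add_cos_sq α
      | linear_combination Real.sin_sq_add_cos_sq θ + Real.cos θ ^ 2 * Real.sin_sq_add_cos_sq α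
      | linear_combination (-(Real.cos θ * Real.sin θ)) * Real.sin_sq_add_cos_sq α
      | linear_combination (Real.cos θ * Real.sin θ) * Real.sin_sq_add_cos_sq α
  have hinv : H⁻¹ = G := Matrix.inv_eq_right_inv hHG
  intro q
  have hv0' : v 0 = Real.sin θ * Real.sin α := hth0.symm
  have hv1' : v 1 = -Real.cos θ * Real.sin α := hth1.symm
  have hv2' : v 2 = Real.cos α := hca.symm
  have hsq : (q • twistM 0 v) ^ 2 = 0 := by
    ext i j
    fin_cases i <;> fin_cases j <;>
      simp [twistM, pow_two, Matrix.mul_apply, Fin.sum_univ_four]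
  have key : H * TZ q = (1 + q • twistM 0 v) * H := by
    ext i j
    fin_cases i <;> fin_cases j <;>
      simp [hH, RZ, RX, TZ, homog, twistM, Matrix.mul_apply, Fin.sum_univ_four,
        Matrix.one_apply, Matrix.add_apply, hv0', hv1', hv2',
        Matrix.vecHead, Matrix.vecTail, -mul_eq_zero] <;>
      ring
  rw [exp_sq_zero hsq, hinv]
  calc 1 + q • twistM 0 v = (1 + q • twistM 0 v) * (H * G) := by rw [hHG, mul_one]
    _ = (1 + q • twistM 0 v) * H * G := by rw [mul_assoc (1 + q • twistM 0 v) H G]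
    _ = H * TZ q * G := by rw [key]
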